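/- There exist a Radon measure μ on ℝ with 0 ∈ supp μ and an orientation-preserving C¹ diffeomorphism f : ℝ → ℝ with f(0) = 0 and f'(0) = 1 such that lim_{t→∞} μ_{0,t} = δ_1 and lim_{t→∞} (fμ)_{0,t} = δ_{−1} in the weak-* topology. -/

import Mathlib

open MeasureTheory Filter Topology Set
open scoped ENNReal NNReal

noncomputable section

/-- `I = [-1,1]`. -/
abbrev I01 : Set ℝ := Set.Icc (-1 : ℝ) 1

/-- The window `x + γ·I_t = [x - γe^{-t}, x + γe^{-t}]`. -/
def window (x γ t : ℝ) : Set ℝ := Set.Icc (x - γ * Real.exp (-t)) (x + γ * Real.exp (-t))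

/-- The scenery `μ_{x,t}` as a measure on `I = [-1,1]`:
`A ↦ μ(x + e^{-t}A) / μ(x + I_t)`. -/
def sceneryMeasure (μ : Measure ℝ) (x t : ℝ) : Measure I01 :=
  (μ (window x 1 t))⁻¹ • Measure.comap (fun a : I01 => x + Real.exp (-t) * (a : ℝ)) μ

/-- The scenery `μ_{x,t}` as a Borel probability measure on `I = [-1,1]`
(with an irrelevant junk value if the normalisation fails, which does not
happen when `μ` is Radon and `x ∈ supp μ`, `t ≥ 0`). -/
def scenery (μ : Measure ℝ) (x t : ℝ) : ProbabilityMeasure I01 := by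
  classical
  exact if h : IsProbabilityMeasure (sceneryMeasure μ x t) then ⟨_, h⟩
  else ⟨Measure.dirac ⟨0, by norm_num⟩, inferInstance⟩

/-- `x` belongs to the topological support of `μ`. -/
def MemSupp (μ : Measure ℝ) (x : ℝ) : Prop := ∀ ε > 0, 0 < μ (Set.Ioo (x - ε) (x + ε))

/-- `f` is an orientation-preserving `C¹` diffeomorphism of `ℝ`. -/
def IsOPDiffeo (f : ℝ → ℝ) : Prop :=
  ContDiff ℝ 1 f ∧ Function.Bijective f ∧ ∀ y : ℝ, 0 < deriv f y

/-- The families of distributions `⟨μ⟩_{x,T}` and `⟨ν⟩_{y,T}` are asymptotic: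
`⟨μ⟩_{x,T} - ⟨ν⟩_{y,T} → 0` weak-*, i.e. for every continuous `g : M^□ → ℝ`,
`(1/T) ∫_0^T (g(μ_{x,t}) - g(ν_{y,t})) dt → 0` as `T → ∞`. -/
def DistAsymptotic (μ : Measure ℝ) (x : ℝ) (ν : Measure ℝ) (y : ℝ) : Prop :=
  ∀ g : C(ProbabilityMeasure I01, ℝ),
    Tendsto (fun T : ℝ => (1 / T) * ∫ t in Set.Ioc (0 : ℝ) T,
      (g (scenery μ x t) - g (scenery ν y t))) atTop (𝓝 0)

/-- Condition (TC) at `x`: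
`lim_{K→∞} limsup_{γ→1⁺} limsup_{T→∞} (1/T)·λ({t ∈ [0,T] : μ(x+γI_t)/μ(x+I_t) ≥ K}) = 0`. -/
def CondTC (μ : Measure ℝ) (x : ℝ) : Prop :=
  Tendsto (fun K : ℝ =>
      limsup (fun γ : ℝ =>
          limsup (fun T : ℝ =>
              (1 / T) * (volume {t : ℝ | t ∈ Set.Icc (0 : ℝ) T ∧
                ENNReal.ofReal K ≤ μ (window x γ t) / μ (window x 1 t)}).toReal)
            atTop)
        (𝓝[>] (1 : ℝ)))
    atTop (𝓝 0)

namespace SceneryAux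

def q : ℝ≥0∞ := 2⁻¹
def rr (n : ℕ) : ℝ≥0∞ := q ^ (n^2)

lemma q_ne_top : q ≠ ⊤ := by simp [q]
lemma q_ne_zero : q ≠ 0 := by simp [q]
lemma q_le_one : q ≤ 1 := by simp [q]
lemma rr_ne_zero (n : ℕ) : rr n ≠ 0 := pow_ne_zero _ q_ne_zero
lemma rr_ne_top (n : ℕ) : rr n ≠ ⊤ := by
  simp [rr, q, ENNReal.pow_ne_top, ENNReal.inv_ne_top]

noncomputable def muZ (z : ℕ → ℝ) : Measure ℝ :=
  Measure.sum (fun n => rr n • Measure.dirac (z n))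

lemma muZ_apply (z : ℕ → ℝ) {s : Set ℝ} (hs : MeasurableSet s) :
    muZ z s = ∑' n, rr n * s.indicator 1 (z n) := by
  rw [muZ, Measure.sum_apply _ hs]
  congr 1; ext n
  rw [Measure.smul_apply, smul_eq_mul, Measure.dirac_apply' _ hs]

lemma one_sub_q : (1 : ℝ≥0∞) - q = q := by
  rw [q]; exact ENNReal.one_sub_inv_two

instance muZ_finite (z : ℕ → ℝ) : IsFiniteMeasure (muZ z) := by
  constructor
  rw [muZ_apply z MeasurableSet.univ]
  have h1 : ∀ n : ℕ, rr n * Set.indicator univ (1 : ℝ → ℝ≥0∞) (z n) ≤ q ^ n := by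
    intro n
    rw [Set.indicator_univ, Pi.one_apply, mul_one]
    exact pow_le_pow_of_le_one zero_le q_le_one (Nat.le_self_pow two_ne_zero n)
  calc (∑' n, rr n * Set.indicator univ (1 : ℝ → ℝ≥0∞) (z n)) ≤ ∑' n : ℕ, q ^ n :=
        ENNReal.tsum_le_tsum h1
    _ = (1 - q)⁻¹ := ENNReal.tsum_geometric q
    _ < ⊤ := by rw [one_sub_q, q]; simp

lemma tail_bound (n : ℕ) : (∑' m : ℕ, if n < m then rr m else 0) ≤ 2 * rr (n+1) := by
  have hinj : Function.Injective (fun j : ℕ => n+1+j) := by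
    intro a b h
    simp only [] at h
    omega
  have hsupp : Function.support (fun m => if n < m then rr m else 0)
      ⊆ Set.range (fun j : ℕ => n+1+j) := by
    intro m hm
    simp only [Function.mem_support] at hm
    have hnm : n < m := by by_contra h; simp [h] at hm
    exact ⟨m - (n+1), by show n+1+(m-(n+1)) = m; omega⟩
  rw [← hinj.tsum_eq hsupp]
  have h2 : ∀ j : ℕ, (if n < n+1+j then rr (n+1+j) else 0) ≤ rr (n+1) * q ^ j := by
    intro j
    rw [if_pos (by omega)]
    have hexp : (n+1)^2 + j ≤ (n+1+j)^2 := by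
      have e1 : (n+1+j)^2 = (n+1)^2 + 2*(n+1)*j + j^2 := by ring
      have e2 : j ≤ 2*(n+1)*j := Nat.le_mul_of_pos_left j (by omega)
      linarith [Nat.zero_le (j^2)]
    calc rr (n+1+j) = q ^ ((n+1+j)^2) := rfl
      _ ≤ q ^ ((n+1)^2 + j) := pow_le_pow_of_le_one zero_le q_le_one hexp
      _ = rr (n+1) * q ^ j := by rw [pow_add]; rfl
  calc (∑' j : ℕ, if n < n+1+j then rr (n+1+j) else 0) ≤ ∑' j : ℕ, rr (n+1) * q ^ j :=
        ENNReal.tsum_le_tsum h2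
    _ = rr (n+1) * (1-q)⁻¹ := by rw [ENNReal.tsum_mul_left, ENNReal.tsum_geometric]
    _ = 2 * rr (n+1) := by rw [one_sub_q, q, inv_inv, mul_comm]

lemma emb (t : ℝ) : MeasurableEmbedding (fun a : I01 => (0:ℝ) + Real.exp (-t) * (a : ℝ)) := by
  have hc : Continuous (fun a : I01 => (0:ℝ) + Real.exp (-t) * (a : ℝ)) := by
    continuity
  have hi : Function.Injective (fun a : I01 => (0:ℝ) + Real.exp (-t) * (a : ℝ)) := by
    intro a b h
    simp only [zero_add] at h
    have hep : (0:ℝ) < Real.exp (-t) := Real.exp_pos _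
    exact Subtype.ext (mul_left_cancel₀ (ne_of_gt hep) h)
  exact (hc.isClosedEmbedding hi).measurableEmbedding

lemma range_emb (t : ℝ) :
    Set.range (fun a : I01 => (0:ℝ) + Real.exp (-t) * (a : ℝ)) = window 0 1 t := by
  have hep : (0:ℝ) < Real.exp (-t) := Real.exp_pos _
  ext x
  simp only [window, Set.mem_range, Set.mem_Icc, zero_add, zero_sub, one_mul]
  constructor
  · rintro ⟨⟨a, ha⟩, rfl⟩
    simp only [Set.mem_Icc] at ha
    constructor <;> nlinarith [ha.1, ha.2]
  · rintro ⟨h1, h2⟩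
    refine ⟨⟨x / Real.exp (-t), ?_, ?_⟩, ?_⟩
    · rw [le_div_iff₀ hep]; linarith
    · rw [div_le_one hep]; linarith
    · exact mul_div_cancel₀ x (ne_of_gt hep)

lemma scenery_eq {μ : Measure ℝ} {x t : ℝ} (h : IsProbabilityMeasure (sceneryMeasure μ x t)) :
    (scenery μ x t : Measure I01) = sceneryMeasure μ x t := by
  have e : scenery μ x t = ⟨sceneryMeasure μ x t, h⟩ := dif_pos h
  rw [e]
  rfl

theorem core (z : ℕ → ℝ) (c : ℝ) (hc : c ∈ I01)
    (H : ∀ η : ℝ, 0 < η → ∀ N : ℕ, ∃ t₀ : ℝ, ∀ t, t₀ ≤ t → ∃ n, N ≤ n ∧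
      |z n| ≤ Real.exp (-t) ∧ |Real.exp t * z n - c| ≤ η ∧ ∀ m, m < n → Real.exp (-t) < |z m|) :
    ∀ φ : C(I01, ℝ), Tendsto (fun t : ℝ => ∫ a, φ a ∂(scenery (muZ z) 0 t : Measure I01))
      atTop (𝓝 (φ ⟨c, hc⟩)) := by
  intro φ
  set c₀ : I01 := ⟨c, hc⟩ with hc₀
  rw [Metric.tendsto_atTop]
  intro ε hε
  have hCb : ∀ a : I01, ‖φ a‖ ≤ ‖φ‖ := fun a => φ.norm_coe_le_norm a
  set C : ℝ := ‖φ‖ with hCdef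
  have hC0 : (0:ℝ) ≤ C := norm_nonneg _
  obtain ⟨η, hη, hball⟩ := Metric.continuousAt_iff.1 (φ.continuous.continuousAt (x := c₀))
    (ε/4) (by positivity)
  obtain ⟨N, hN⟩ : ∃ N : ℕ, (2*C+2) * ((2:ℝ)⁻¹ ^ (2*N)) < ε/2 := by
    obtain ⟨N, hN⟩ := exists_pow_lt_of_lt_one
      (show (0:ℝ) < (ε/2)/(2*C+2) by positivity) (show (2:ℝ)⁻¹ < 1 by norm_num)
    refine ⟨N, ?_⟩
    have h1 : ((2:ℝ)⁻¹)^(2*N) ≤ ((2:ℝ)⁻¹)^N :=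
      pow_le_pow_of_le_one (by norm_num) (by norm_num) (by omega)
    have h2 : (0:ℝ) < 2*C+2 := by linarith
    have h3 : ((2:ℝ)⁻¹)^N * (2*C+2) < ε/2 := (lt_div_iff₀ h2).1 hN
    nlinarith [pow_nonneg (by norm_num : (0:ℝ) ≤ 2⁻¹) (2*N)]
  obtain ⟨t₀, ht₀⟩ := H (η/2) (by positivity) N
  refine ⟨t₀, fun t ht => ?_⟩
  obtain ⟨n, hnN, hzn, hposn, hmin⟩ := ht₀ t ht
  have hw : (0:ℝ) < Real.exp (-t) := Real.exp_pos _
  have hwet : Real.exp t * Real.exp (-t) = 1 := by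
    rw [← Real.exp_add]; simp
  have hwin : MeasurableSet (window 0 1 t) := measurableSet_Icc
  have hzn_mem : z n ∈ window 0 1 t := by
    rcases abs_le.1 hzn with ⟨h1, h2⟩
    simp only [window, Set.mem_Icc]
    constructor <;> nlinarith
  set M : ℝ≥0∞ := muZ z (window 0 1 t) with hMdef
  have hM_lb : rr n ≤ M := by
    rw [hMdef, muZ_apply z hwin]
    refine le_trans ?_ (ENNReal.le_tsum n)
    rw [Set.indicator_of_mem hzn_mem, Pi.one_apply, mul_one]
  have hM0 : M ≠ 0 := by
    intro h
    exact rr_ne_zero n (le_antisymm (h ▸ hM_lb) zero_le)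
  have hMtop : M ≠ ⊤ := measure_ne_top _ _
  have hprob : IsProbabilityMeasure (sceneryMeasure (muZ z) 0 t) := by
    constructor
    rw [sceneryMeasure, Measure.smul_apply, smul_eq_mul, (emb t).comap_apply,
      Set.image_univ, range_emb t]
    exact ENNReal.inv_mul_cancel hM0 hMtop
  rw [scenery_eq hprob]
  set ν : Measure I01 := sceneryMeasure (muZ z) 0 t with hνdef
  haveI : IsProbabilityMeasure ν := hprob
  set F : Set I01 := {a : I01 | η/2 < |(a:ℝ) - c|} with hF
  have hFmeas : MeasurableSet F := by
    have : IsOpen F := isOpen_lt continuous_const ((continuous_subtype_val.sub continuous_const).abs)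
    exact this.measurableSet
  have hνF : ν F ≤ q ^ (2*n) := by
    have hsub : (fun a : I01 => (0:ℝ) + Real.exp (-t) * (a : ℝ)) '' F
        ⊆ window 0 1 t ∩ {x : ℝ | η/2 * Real.exp (-t) < |x - Real.exp (-t) * c|} := by
      rintro x ⟨a, haF, rfl⟩
      refine ⟨by rw [← range_emb t]; exact ⟨a, rfl⟩, ?_⟩
      have he : (0:ℝ) + Real.exp (-t) * (a:ℝ) - Real.exp (-t) * c
          = Real.exp (-t) * ((a:ℝ) - c) := by ring
      rw [Set.mem_setOf_eq, he, abs_mul, abs_of_pos hw]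
      calc η/2 * Real.exp (-t) = Real.exp (-t) * (η/2) := mul_comm _ _
        _ < Real.exp (-t) * |(a:ℝ) - c| := (mul_lt_mul_iff_right₀ hw).2 haF
    have hDmeas : MeasurableSet (window 0 1 t
        ∩ {x : ℝ | η/2 * Real.exp (-t) < |x - Real.exp (-t) * c|}) := by
      refine hwin.inter ?_
      exact measurableSet_lt measurable_const ((measurable_id.sub measurable_const).abs)
    have hμD : muZ z (window 0 1 t ∩ {x : ℝ | η/2 * Real.exp (-t) < |x - Real.exp (-t) * c|})
        ≤ ∑' m, if n < m then rr m else 0 := by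
      rw [muZ_apply z hDmeas]
      refine ENNReal.tsum_le_tsum fun m => ?_
      by_cases hm : z m ∈ window 0 1 t ∩ {x : ℝ | η/2 * Real.exp (-t) < |x - Real.exp (-t) * c|}
      · rw [Set.indicator_of_mem hm, Pi.one_apply, mul_one]
        have hmw : |z m| ≤ Real.exp (-t) := by
          have := hm.1
          simp only [window, Set.mem_Icc] at this
          rw [abs_le]; constructor <;> nlinarith [this.1, this.2]
        have h1 : ¬ (m < n) := fun hlt => absurd (hmin m hlt) (not_lt.2 hmw)
        have h2 : m ≠ n := by
          rintro rfl
          have hd := hm.2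
          rw [Set.mem_setOf_eq] at hd
          have hzm : Real.exp (-t) * (Real.exp t * z m) = z m := by
            rw [← mul_assoc, mul_comm (Real.exp (-t)), hwet, one_mul]
          have he2 : |z m - Real.exp (-t) * c| = Real.exp (-t) * |Real.exp t * z m - c| := by
            calc |z m - Real.exp (-t) * c| = |Real.exp (-t) * (Real.exp t * z m - c)| := by
                  rw [mul_sub, hzm]
              _ = Real.exp (-t) * |Real.exp t * z m - c| := by rw [abs_mul, abs_of_pos hw]
          rw [he2] at hd
          have := (mul_lt_mul_iff_right₀ hw).1 (by linarith [hd] : Real.exp (-t) * (η/2) < Real.exp (-t) * |Real.exp t * z m - c|)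
          linarith [hposn]
        rw [if_pos (by omega)]
      · rw [Set.indicator_of_notMem hm, mul_zero]
        exact zero_le
    rw [hνdef, sceneryMeasure, Measure.smul_apply, smul_eq_mul, (emb t).comap_apply]
    calc M⁻¹ * muZ z ((fun a : I01 => (0:ℝ) + Real.exp (-t) * (a : ℝ)) '' F)
        ≤ (rr n)⁻¹ * (2 * rr (n+1)) := by
          refine mul_le_mul' (ENNReal.inv_le_inv.2 hM_lb) ?_
          exact le_trans (measure_mono hsub) (le_trans hμD (tail_bound n))
      _ = q ^ (2*n) := by
          have h1 : rr (n+1) = rr n * (q * q^(2*n)) := by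
            rw [rr, rr, ← pow_succ', ← pow_add]
            congr 1
            ring
          rw [h1, ← mul_assoc, ← mul_assoc]
          have h2 : (rr n)⁻¹ * 2 * rr n = 2 * ((rr n)⁻¹ * rr n) := by ring
          rw [h2, ENNReal.inv_mul_cancel (rr_ne_zero n) (rr_ne_top n), mul_one, ← mul_assoc]
          have h3 : (2:ℝ≥0∞) * q = 1 := by
            rw [q]; exact ENNReal.mul_inv_cancel (by norm_num) (by norm_num)
          rw [h3, one_mul]
  -- integral estimate
  have hint : Integrable (fun a : I01 => φ a) ν :=
    Integrable.mono' (integrable_const C) φ.continuous.aestronglyMeasurable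
      (ae_of_all _ fun a => hCb a)
  have hintc : Integrable (fun _ : I01 => φ c₀) ν := integrable_const _
  have hsubint : Integrable (fun a : I01 => φ a - φ c₀) ν := hint.sub hintc
  have hkey : (∫ a, φ a ∂ν) - φ c₀ = ∫ a, (φ a - φ c₀) ∂ν := by
    rw [integral_sub hint hintc, integral_const]
    simp [measure_univ]
  rw [dist_eq_norm, hkey, ← integral_add_compl hFmeas hsubint]
  have hbF : ‖∫ a in F, (φ a - φ c₀) ∂ν‖ ≤ (2*C) * (ν F).toReal := by
    refine norm_setIntegral_le_of_norm_le_const (measure_lt_top ν F) (fun a _ => ?_)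
    calc ‖φ a - φ c₀‖ ≤ ‖φ a‖ + ‖φ c₀‖ := norm_sub_le _ _
      _ ≤ C + C := add_le_add (hCb a) (hCb c₀)
      _ = 2*C := by ring
  have hbFc : ‖∫ a in Fᶜ, (φ a - φ c₀) ∂ν‖ ≤ (ε/4) * (ν Fᶜ).toReal := by
    refine norm_setIntegral_le_of_norm_le_const (measure_lt_top ν _) (fun a ha => ?_)
    have hda : dist a c₀ < η := by
      have h5 : ¬ (η/2 < |(a:ℝ) - c|) := ha
      rw [Subtype.dist_eq, Real.dist_eq]
      have : |(a:ℝ) - c| ≤ η/2 := not_lt.1 h5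
      calc |(a:ℝ) - (c₀:ℝ)| = |(a:ℝ) - c| := by rw [hc₀]
        _ ≤ η/2 := this
        _ < η := by linarith
    have := hball hda
    rw [Real.dist_eq] at this
    rw [Real.norm_eq_abs]
    exact le_of_lt this
  have hνF_real : (ν F).toReal ≤ (2:ℝ)⁻¹ ^ (2*n) := by
    have h6 := ENNReal.toReal_mono (ENNReal.pow_ne_top (by simp [q])) hνF
    calc (ν F).toReal ≤ (q ^ (2*n)).toReal := h6
      _ = (2:ℝ)⁻¹ ^ (2*n) := by
          rw [ENNReal.toReal_pow, q, ENNReal.toReal_inv]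
          norm_num
  have hνFc_real : (ν Fᶜ).toReal ≤ 1 := by
    have := prob_le_one (μ := ν) (s := Fᶜ)
    have := ENNReal.toReal_mono ENNReal.one_ne_top this
    simpa using this
  calc ‖(∫ a in F, (φ a - φ c₀) ∂ν) + ∫ a in Fᶜ, (φ a - φ c₀) ∂ν‖
      ≤ ‖∫ a in F, (φ a - φ c₀) ∂ν‖ + ‖∫ a in Fᶜ, (φ a - φ c₀) ∂ν‖ := norm_add_le _ _
    _ ≤ (2*C) * (ν F).toReal + (ε/4) * (ν Fᶜ).toReal := add_le_add hbF hbFc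
    _ < ε := by
        have h2 : ((2:ℝ)⁻¹)^(2*n) ≤ ((2:ℝ)⁻¹)^(2*N) :=
          pow_le_pow_of_le_one (by norm_num) (by norm_num) (by omega)
        have h7 : (0:ℝ) ≤ (ν F).toReal := ENNReal.toReal_nonneg
        have h8 : (0:ℝ) < ((2:ℝ)⁻¹)^(2*N) := by positivity
        nlinarith
/-! ### The explicit diffeomorphism and atom positions -/

def hh (x : ℝ) : ℝ := x^2 / (2*(1+x^2))
def ff (x : ℝ) : ℝ := x + hh x
def KK (k : ℕ) : ℝ := (k:ℝ) + 101
def bb (k : ℕ) : ℝ := 3 / (2 * KK k)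
def aa (k : ℕ) : ℝ := bb k - (1 / KK k)^3
def bbp (k : ℕ) : ℝ := bb k - hh (bb k)
def zz (n : ℕ) : ℝ := if n % 2 = 0 then aa (n / 2) else -(bb (n / 2))

lemma KK_ge (k : ℕ) : (101:ℝ) ≤ KK k := by
  have : (0:ℝ) ≤ (k:ℝ) := Nat.cast_nonneg k
  simp only [KK]; linarith

lemma KK_pos (k : ℕ) : (0:ℝ) < KK k := lt_of_lt_of_le (by norm_num) (KK_ge k)

lemma KK_succ (k : ℕ) : KK (k+1) = KK k + 1 := by
  simp only [KK]; push_cast; ring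

lemma KK_ge_nat (k : ℕ) : (k:ℝ) ≤ KK k := by simp only [KK]; linarith

lemma bb_pos (k : ℕ) : 0 < bb k := by
  have := KK_pos k; rw [bb]; positivity

lemma bb_le (k : ℕ) : bb k ≤ 3/202 := by
  have h1 := KK_ge k
  have h2 := KK_pos k
  rw [bb, div_le_div_iff₀ (by linarith) (by norm_num)]
  nlinarith

lemma aa_lb (k : ℕ) : 1 / KK k ≤ aa k := by
  have h1 := KK_ge k
  have h2 := KK_pos k
  rw [aa, bb, ← sub_nonneg]
  have e : 3 / (2 * KK k) - (1 / KK k)^3 - 1 / KK k = (KK k^2/2 - 1) / KK k^3 := by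
    field_simp; ring
  rw [e]
  apply div_nonneg _ (by positivity)
  nlinarith

lemma aa_pos (k : ℕ) : 0 < aa k :=
  lt_of_lt_of_le (by have := KK_pos k; positivity) (aa_lb k)

lemma aa_lt_bb (k : ℕ) : aa k < bb k := by
  have := KK_pos k
  rw [aa]
  have : (0:ℝ) < (1 / KK k)^3 := by positivity
  linarith

lemma bb_anti (k : ℕ) : bb (k+1) < bb k := by
  have h1 := KK_pos k
  have h2 := KK_pos (k+1)
  rw [bb, bb, KK_succ, div_lt_div_iff₀ (by rw [KK_succ] at h2; linarith) (by linarith)]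
  nlinarith

lemma bb_succ_lt_aa (k : ℕ) : bb (k+1) < aa k := by
  have h1 := KK_ge k
  have h2 := KK_pos k
  rw [aa, bb, bb, KK_succ, ← sub_pos]
  have e : 3 / (2 * KK k) - (1 / KK k)^3 - 3 / (2 * (KK k + 1))
      = (3/2 * KK k^2 - (KK k + 1)) / (KK k^3 * (KK k + 1)) := by
    field_simp; ring
  rw [e]
  apply div_pos _ (by positivity)
  nlinarith

lemma aa_anti : StrictAnti aa :=
  strictAnti_nat_of_succ_lt fun k => lt_trans (aa_lt_bb (k+1)) (bb_succ_lt_aa k)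

lemma hh_nonneg (x : ℝ) : 0 ≤ hh x := by rw [hh]; positivity

lemma hh_le_sq (x : ℝ) : hh x ≤ x^2/2 := by
  rw [hh, div_le_div_iff₀ (by positivity) (by norm_num)]
  nlinarith [sq_nonneg x]

lemma hh_le_half (x : ℝ) : hh x ≤ 1/2 := by
  rw [hh, div_le_div_iff₀ (by positivity) (by norm_num)]
  nlinarith [sq_nonneg x]

lemma hh_lt_self {x : ℝ} (hx : 0 < x) : hh x < x := by
  rw [hh, div_lt_iff₀ (by positivity)]
  nlinarith [sq_nonneg x]

lemma hh_mono {x y : ℝ} (hx : 0 ≤ x) (hxy : x ≤ y) : hh x ≤ hh y := by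
  rw [hh, hh, div_le_div_iff₀ (by positivity) (by positivity)]
  nlinarith [sq_nonneg x, sq_nonneg y]

lemma hh_lb {x : ℝ} (hx : 0 ≤ x) (hx4 : x ≤ 1/4) : 8/17*x^2 ≤ hh x := by
  rw [hh, le_div_iff₀ (by positivity)]
  have h1 : (0:ℝ) ≤ 1-4*x := by linarith
  have h2 : (0:ℝ) ≤ 1+4*x := by linarith
  nlinarith [mul_nonneg (mul_nonneg (mul_nonneg h1 h2) hx) hx]

lemma subhh_mono {x y : ℝ} (hx : 0 ≤ x) (hxy : x < y) : x - hh x < y - hh y := by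
  rw [← sub_pos, hh, hh]
  have e : y - y^2/(2*(1+y^2)) - (x - x^2/(2*(1+x^2)))
      = (y-x) * (2*(1+x^2)*(1+y^2) - (x+y)) / (2*(1+x^2)*(1+y^2)) := by
    field_simp
    ring
  rw [e]
  apply div_pos _ (by positivity)
  apply mul_pos (by linarith)
  nlinarith [sq_nonneg (x-1), sq_nonneg (y-1), sq_nonneg (x*y), mul_nonneg hx (le_of_lt (lt_of_le_of_lt hx hxy))]

lemma ff_hasDeriv (x : ℝ) : HasDerivAt ff (1 + x/(1+x^2)^2) x := by
  have hd : (2*(1+x^2)) ≠ 0 := by positivity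
  have h1 : HasDerivAt (fun y : ℝ => y^2) (2*x) x := by
    simpa using hasDerivAt_pow 2 x
  have h2 : HasDerivAt (fun y : ℝ => 2*(1+y^2)) (2*(2*x)) x := by
    have := ((hasDerivAt_const x (1:ℝ)).add h1).const_mul (2:ℝ)
    simpa using this
  have h3 := h1.div h2 hd
  have h4 := (hasDerivAt_id x).add h3
  have he : ff = fun y : ℝ => y + y^2 / (2*(1+y^2)) := by
    funext y; rw [ff, hh]
  rw [he]
  refine h4.congr_deriv ?_
  field_simp
  ring

lemma ff_deriv (x : ℝ) : deriv ff x = 1 + x/(1+x^2)^2 := (ff_hasDeriv x).deriv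

lemma ff_deriv_pos (x : ℝ) : 0 < deriv ff x := by
  rw [ff_deriv]
  have h5 : (0:ℝ) < (1+x^2)^2 := by positivity
  have e : 1 + x/(1+x^2)^2 = ((1+x^2)^2 + x)/(1+x^2)^2 := by field_simp
  rw [e]
  apply div_pos _ h5
  nlinarith [sq_nonneg (x+1), sq_nonneg x, sq_nonneg (x^2)]

lemma ff_contDiff : ContDiff ℝ 1 ff := by
  have he : ff = fun y : ℝ => y + y^2 / (2*(1+y^2)) := by
    funext y; rw [ff, hh]
  rw [he]
  have h1 : ContDiff ℝ 1 (fun x : ℝ => x^2) := by fun_prop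
  have h2 : ContDiff ℝ 1 (fun x : ℝ => 2*(1+x^2)) := by fun_prop
  exact contDiff_id.add (h1.div h2 (fun x => by positivity))

lemma ff_cont : Continuous ff := ff_contDiff.continuous

lemma ff_strictMono : StrictMono ff := strictMono_of_deriv_pos ff_deriv_pos

lemma ff_surj : Function.Surjective ff := by
  intro y
  have h1 : ff (y-1) ≤ y := by
    rw [ff]
    have := hh_le_half (y-1)
    linarith
  have h2 : y ≤ ff y := by
    rw [ff]
    have := hh_nonneg y
    linarith
  obtain ⟨x, _, hx⟩ := intermediate_value_Icc (by linarith : y-1 ≤ y)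
    ff_cont.continuousOn ⟨h1, h2⟩
  exact ⟨x, hx⟩

lemma ff_bij : Function.Bijective ff := ⟨ff_strictMono.injective, ff_surj⟩

lemma ff_zero : ff 0 = 0 := by rw [ff, hh]; norm_num

lemma ff_deriv_zero : deriv ff 0 = 1 := by rw [ff_deriv]; norm_num

lemma ff_pos {x : ℝ} (hx : 0 < x) : 0 < ff x := by
  rw [ff]; have := hh_nonneg x; linarith

lemma ff_neg_eq (x : ℝ) : ff (-x) = -(x - hh x) := by
  rw [ff, hh, hh]; ring_nf

lemma bbp_pos (k : ℕ) : 0 < bbp k := by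
  rw [bbp]
  have := hh_lt_self (bb_pos k)
  linarith

lemma bbp_le_bb (k : ℕ) : bbp k ≤ bb k := by
  rw [bbp]; have := hh_nonneg (bb k); linarith

lemma bbp_anti : StrictAnti bbp :=
  strictAnti_nat_of_succ_lt fun k => by
    rw [bbp, bbp]
    exact subhh_mono (le_of_lt (bb_pos (k+1))) (bb_anti k)

lemma bbp_lb (k : ℕ) : 1 / KK k ≤ bbp k := by
  have h1 := KK_ge k
  have h2 := KK_pos k
  have h3 : hh (bb k) ≤ (bb k)^2/2 := hh_le_sq (bb k)
  have h4 : bb k - (bb k)^2/2 - 1/KK k = (KK k - 9/4) / (2 * KK k^2) := by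
    rw [bb]; field_simp; ring
  have h5 : (0:ℝ) ≤ (KK k - 9/4) / (2 * KK k^2) := by
    apply div_nonneg _ (by positivity)
    linarith
  rw [bbp]
  linarith [h4 ▸ h5]
lemma C3 (k : ℕ) : bbp k < ff (aa (k+1)) := by
  have h1 := KK_ge k
  have h0 : (0:ℝ) < KK k := KK_pos k
  have hK1 : KK (k+1) = KK k + 1 := KK_succ k
  have hred : bb k - aa (k+1) < hh (bb k) + hh (aa (k+1)) := by
    have hb4 : bb k ≤ 1/4 := le_trans (bb_le k) (by norm_num)
    have ha4 : aa (k+1) ≤ 1/4 :=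
      le_trans (le_of_lt (aa_lt_bb _)) (le_trans (bb_le _) (by norm_num))
    have hlb1 := hh_lb (le_of_lt (bb_pos k)) hb4
    have hlb2 := hh_lb (le_of_lt (aa_pos (k+1))) ha4
    have ha_lb : 1/(KK k+1) ≤ aa (k+1) := by
      have := aa_lb (k+1); rwa [hK1] at this
    have hsq : (1/(KK k+1))^2 ≤ (aa (k+1))^2 :=
      pow_le_pow_left₀ (by positivity) ha_lb 2
    have hkey : 3/(2*KK k*(KK k+1)) + 1/(KK k+1)^3
        < 8/17*((3/(2*KK k))^2 + (1/(KK k+1))^2) := by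
      rw [← sub_pos]
      have e : 8/17*((3/(2*KK k))^2 + (1/(KK k+1))^2)
          - (3/(2*KK k*(KK k+1)) + 1/(KK k+1)^3)
          = (8/17*(9/4*(KK k+1)^3 + KK k^2*(KK k+1)) - (3/2*KK k*(KK k+1)^2 + KK k^2))
            / (KK k^2*(KK k+1)^3) := by
        field_simp
        ring
      rw [e]
      apply div_pos _ (by positivity)
      nlinarith
    have hident : bb k - aa (k+1) = 3/(2*KK k*(KK k+1)) + 1/(KK k+1)^3 := by
      rw [aa, bb, bb, hK1]
      field_simp
      ring
    have hbbval : (3/(2*KK k))^2 = (bb k)^2 := by rw [bb]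
    calc bb k - aa (k+1) = 3/(2*KK k*(KK k+1)) + 1/(KK k+1)^3 := hident
      _ < 8/17*((3/(2*KK k))^2 + (1/(KK k+1))^2) := hkey
      _ ≤ 8/17*((bb k)^2 + (aa (k+1))^2) := by rw [hbbval]; nlinarith [hsq]
      _ = 8/17*(bb k)^2 + 8/17*(aa (k+1))^2 := by ring
      _ ≤ hh (bb k) + hh (aa (k+1)) := add_le_add hlb1 hlb2
  rw [bbp, ff]
  linarith

lemma ratio_aa {η : ℝ} (hη : 0 < η) : ∃ k₁ : ℕ, ∀ k, k₁ ≤ k → (1-η) * aa k ≤ aa (k+1) := by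
  obtain ⟨k₁, hk₁⟩ := exists_nat_ge (3/η)
  refine ⟨k₁, fun k hk => ?_⟩
  have h0 : (0:ℝ) < KK k := KK_pos k
  have h1 := KK_ge k
  have hKk : 3/η ≤ KK k := le_trans hk₁ (le_trans (Nat.cast_le.2 hk) (KK_ge_nat k))
  have h2 : 3 ≤ KK k * η := by
    rw [div_le_iff₀ hη] at hKk; linarith
  have h2' : 3/KK k ≤ η := by rw [div_le_iff₀ h0]; linarith
  have hA : aa k - aa (k+1) ≤ bb k - bb (k+1) := by
    rw [aa, aa]
    have hcube : (1/KK (k+1))^3 ≤ (1/KK k)^3 := by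
      have hp1 := KK_pos (k+1)
      apply pow_le_pow_left₀ (by positivity)
      apply one_div_le_one_div_of_le h0
      rw [KK_succ]; linarith
    linarith
  have hB : bb k - bb (k+1) = 3/(2*KK k*(KK k+1)) := by
    rw [bb, bb, KK_succ]; field_simp; ring
  have hC : 3/(2*KK k*(KK k+1)) ≤ 3/KK k^2 := by
    rw [div_le_div_iff₀ (by positivity) (by positivity)]
    nlinarith
  have hD : 3/KK k * (1/KK k) ≤ η * aa k :=
    mul_le_mul h2' (aa_lb k) (by positivity) (le_of_lt hη)
  have hE : 3/KK k * (1/KK k) = 3/KK k^2 := by ring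
  nlinarith [hA, hB, hC, hD, hE]

lemma ratio_bbp {η : ℝ} (hη : 0 < η) : ∃ k₁ : ℕ, ∀ k, k₁ ≤ k → (1-η) * bbp k ≤ bbp (k+1) := by
  obtain ⟨k₁, hk₁⟩ := exists_nat_ge (3/η)
  refine ⟨k₁, fun k hk => ?_⟩
  have h0 : (0:ℝ) < KK k := KK_pos k
  have h1 := KK_ge k
  have hKk : 3/η ≤ KK k := le_trans hk₁ (le_trans (Nat.cast_le.2 hk) (KK_ge_nat k))
  have h2 : 3 ≤ KK k * η := by
    rw [div_le_iff₀ hη] at hKk; linarith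
  have h2' : 3/KK k ≤ η := by rw [div_le_iff₀ h0]; linarith
  have hA : bbp k - bbp (k+1) ≤ bb k - bb (k+1) := by
    rw [bbp, bbp]
    have := hh_mono (le_of_lt (bb_pos (k+1))) (le_of_lt (bb_anti k))
    linarith
  have hB : bb k - bb (k+1) = 3/(2*KK k*(KK k+1)) := by
    rw [bb, bb, KK_succ]; field_simp; ring
  have hC : 3/(2*KK k*(KK k+1)) ≤ 3/KK k^2 := by
    rw [div_le_div_iff₀ (by positivity) (by positivity)]
    nlinarith
  have hD : 3/KK k * (1/KK k) ≤ η * bbp k :=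
    mul_le_mul h2' (bbp_lb k) (by positivity) (le_of_lt hη)
  have hE : 3/KK k * (1/KK k) = 3/KK k^2 := by ring
  nlinarith [hA, hB, hC, hD, hE]

lemma ex_aa_le {w : ℝ} (hw : 0 < w) : ∃ k, aa k ≤ w := by
  obtain ⟨k, hk⟩ := exists_nat_ge (3/(2*w))
  refine ⟨k, ?_⟩
  have h0 := KK_pos k
  have hKk : 3/(2*w) ≤ KK k := le_trans hk (KK_ge_nat k)
  have h3 : 3 ≤ KK k * (2*w) := by
    rw [div_le_iff₀ (by positivity)] at hKk; linarith
  have : bb k ≤ w := by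
    rw [bb, div_le_iff₀ (by positivity)]; nlinarith
  linarith [aa_lt_bb k]

lemma ex_bbp_le {w : ℝ} (hw : 0 < w) : ∃ k, bbp k ≤ w := by
  obtain ⟨k, hk⟩ := exists_nat_ge (3/(2*w))
  refine ⟨k, ?_⟩
  have h0 := KK_pos k
  have hKk : 3/(2*w) ≤ KK k := le_trans hk (KK_ge_nat k)
  have h3 : 3 ≤ KK k * (2*w) := by
    rw [div_le_iff₀ (by positivity)] at hKk; linarith
  have : bb k ≤ w := by
    rw [bb, div_le_iff₀ (by positivity)]; nlinarith
  linarith [bbp_le_bb k]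

lemma zz_even (k : ℕ) : zz (2*k) = aa k := by
  have h1 : (2*k) % 2 = 0 := Nat.mul_mod_right 2 k
  have h2 : (2*k) / 2 = k := Nat.mul_div_cancel_left k (by norm_num)
  rw [zz, if_pos h1, h2]

lemma zz_odd (k : ℕ) : zz (2*k+1) = -(bb k) := by
  have h2 : (2*k+1) / 2 = k := by omega
  rw [zz, if_neg (by omega), h2]
lemma H_pos : ∀ η : ℝ, 0 < η → ∀ N : ℕ, ∃ t₀ : ℝ, ∀ t, t₀ ≤ t → ∃ n, N ≤ n ∧
    |zz n| ≤ Real.exp (-t) ∧ |Real.exp t * zz n - 1| ≤ η ∧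
    ∀ m, m < n → Real.exp (-t) < |zz m| := by
  intro η hη N
  obtain ⟨k₁', hk₁'⟩ := ratio_aa hη
  set k₁ := max k₁' N with hk₁def
  refine ⟨-Real.log (aa k₁) + 1, fun t ht => ?_⟩
  set w := Real.exp (-t) with hwdef
  have hw : 0 < w := Real.exp_pos _
  have hwlt : w < aa k₁ := by
    have h1 : -t ≤ Real.log (aa k₁) - 1 := by linarith
    have h2 : w ≤ Real.exp (Real.log (aa k₁) - 1) := Real.exp_le_exp.2 h1
    rw [Real.exp_sub, Real.exp_log (aa_pos k₁)] at h2
    have h3 : (1:ℝ) < Real.exp 1 := by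
      have := Real.add_one_le_exp 1; linarith
    calc w ≤ aa k₁ / Real.exp 1 := h2
      _ < aa k₁ := by
          rw [div_lt_iff₀ (by positivity)]
          nlinarith [aa_pos k₁]
  have hex : ∃ k, aa k ≤ w := ex_aa_le hw
  have hak : aa (Nat.find hex) ≤ w := Nat.find_spec hex
  have hmink : ∀ j, j < Nat.find hex → w < aa j := fun j hj =>
    lt_of_not_ge (Nat.find_min hex hj)
  have hk_gt : k₁ < Nat.find hex := by
    by_contra h
    push_neg at h
    have : aa k₁ ≤ aa (Nat.find hex) := aa_anti.antitone h
    linarith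
  obtain ⟨k', hkk⟩ : ∃ k', Nat.find hex = k' + 1 := ⟨Nat.find hex - 1, by omega⟩
  rw [hkk] at hak hmink
  refine ⟨2*(k'+1), by have := le_max_right k₁' N; omega, ?_, ?_, ?_⟩
  · rw [zz_even, abs_of_pos (aa_pos _)]; exact hak
  · rw [zz_even, abs_le]
    have hkk' : k₁ ≤ k' := by omega
    have hra := hk₁' k' (le_trans (le_max_left _ _) hkk')
    have hwa : w < aa k' := hmink k' (by omega)
    have hv1 : Real.exp t * aa (k'+1) ≤ 1 := by
      have hconv : Real.exp t * aa (k'+1) = aa (k'+1) / w := by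
        rw [hwdef, Real.exp_neg]
        field_simp
      rw [hconv, div_le_one hw]
      exact hak
    have hv2 : 1 - η ≤ Real.exp t * aa (k'+1) := by
      by_cases hcase : 1 ≤ η
      · have hnn : 0 ≤ Real.exp t * aa (k'+1) := by
          have := aa_pos (k'+1); positivity
        linarith
      · have h1η : 0 < 1 - η := by linarith
        have h5 : (1-η) * w < (1-η) * aa k' := mul_lt_mul_of_pos_left hwa h1η
        have h6 : (1-η) * w < aa (k'+1) := lt_of_lt_of_le h5 hra
        have hconv : Real.exp t * aa (k'+1) = aa (k'+1) / w := by
          rw [hwdef, Real.exp_neg]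
          field_simp
        rw [hconv, le_div_iff₀ hw]
        linarith
    constructor <;> linarith
  · intro m hm
    rcases Nat.even_or_odd m with ⟨j, hj⟩ | ⟨j, hj⟩
    · have h2j : m = 2*j := by omega
      rw [h2j, zz_even, abs_of_pos (aa_pos _)]
      exact hmink j (by omega)
    · have h2j : m = 2*j+1 := by omega
      rw [h2j, zz_odd, abs_neg, abs_of_pos (bb_pos _)]
      exact lt_trans (hmink j (by omega)) (aa_lt_bb j)

lemma H_neg : ∀ η : ℝ, 0 < η → ∀ N : ℕ, ∃ t₀ : ℝ, ∀ t, t₀ ≤ t → ∃ n, N ≤ n ∧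
    |ff (zz n)| ≤ Real.exp (-t) ∧ |Real.exp t * ff (zz n) - (-1)| ≤ η ∧
    ∀ m, m < n → Real.exp (-t) < |ff (zz m)| := by
  intro η hη N
  obtain ⟨k₁', hk₁'⟩ := ratio_bbp hη
  set k₁ := max k₁' N with hk₁def
  refine ⟨-Real.log (bbp k₁) + 1, fun t ht => ?_⟩
  set w := Real.exp (-t) with hwdef
  have hw : 0 < w := Real.exp_pos _
  have hwlt : w < bbp k₁ := by
    have h1 : -t ≤ Real.log (bbp k₁) - 1 := by linarith
    have h2 : w ≤ Real.exp (Real.log (bbp k₁) - 1) := Real.exp_le_exp.2 h1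
    rw [Real.exp_sub, Real.exp_log (bbp_pos k₁)] at h2
    have h3 : (1:ℝ) < Real.exp 1 := by
      have := Real.add_one_le_exp 1; linarith
    calc w ≤ bbp k₁ / Real.exp 1 := h2
      _ < bbp k₁ := by
          rw [div_lt_iff₀ (by positivity)]
          nlinarith [bbp_pos k₁]
  have hex : ∃ k, bbp k ≤ w := ex_bbp_le hw
  have hbk : bbp (Nat.find hex) ≤ w := Nat.find_spec hex
  have hmink : ∀ j, j < Nat.find hex → w < bbp j := fun j hj =>
    lt_of_not_ge (Nat.find_min hex hj)
  have hk_gt : k₁ < Nat.find hex := by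
    by_contra h
    push_neg at h
    have : bbp k₁ ≤ bbp (Nat.find hex) := bbp_anti.antitone h
    linarith
  obtain ⟨k', hkk⟩ : ∃ k', Nat.find hex = k' + 1 := ⟨Nat.find hex - 1, by omega⟩
  rw [hkk] at hbk hmink
  have hffodd : ∀ j : ℕ, ff (zz (2*j+1)) = -(bbp j) := by
    intro j
    rw [zz_odd, ff_neg_eq, bbp]
  have hffeven : ∀ j : ℕ, ff (zz (2*j)) = ff (aa j) := fun j => by rw [zz_even]
  refine ⟨2*(k'+1)+1, by have := le_max_right k₁' N; omega, ?_, ?_, ?_⟩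
  · rw [hffodd, abs_neg, abs_of_pos (bbp_pos _)]; exact hbk
  · rw [hffodd, abs_le]
    have hkk' : k₁ ≤ k' := by omega
    have hra := hk₁' k' (le_trans (le_max_left _ _) hkk')
    have hwb : w < bbp k' := hmink k' (by omega)
    have hconv : Real.exp t * bbp (k'+1) = bbp (k'+1) / w := by
      rw [hwdef, Real.exp_neg]
      field_simp
    have hv1 : Real.exp t * bbp (k'+1) ≤ 1 := by
      rw [hconv, div_le_one hw]; exact hbk
    have hv2 : 1 - η ≤ Real.exp t * bbp (k'+1) := by
      by_cases hcase : 1 ≤ η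
      · have hnn : 0 ≤ Real.exp t * bbp (k'+1) := by
          have := bbp_pos (k'+1); positivity
        linarith
      · have h1η : 0 < 1 - η := by linarith
        have h5 : (1-η) * w < (1-η) * bbp k' := mul_lt_mul_of_pos_left hwb h1η
        have h6 : (1-η) * w < bbp (k'+1) := lt_of_lt_of_le h5 hra
        rw [hconv, le_div_iff₀ hw]
        linarith
    have he : Real.exp t * -(bbp (k'+1)) - (-1) = 1 - Real.exp t * bbp (k'+1) := by ring
    rw [he]
    constructor <;> linarith
  · intro m hm
    rcases Nat.even_or_odd m with ⟨j, hj⟩ | ⟨j, hj⟩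
    · have h2j : m = 2*j := by omega
      have hjle : j ≤ k'+1 := by omega
      rw [h2j, hffeven, abs_of_pos (ff_pos (aa_pos j))]
      have hchain1 : ff (aa (k'+1)) ≤ ff (aa j) :=
        ff_strictMono.monotone (aa_anti.antitone hjle)
      have hchain2 : bbp k' < ff (aa (k'+1)) := C3 k'
      have hchain3 : w < bbp k' := hmink k' (by omega)
      linarith
    · have h2j : m = 2*j+1 := by omega
      rw [h2j, hffodd, abs_neg, abs_of_pos (bbp_pos _)]
      exact hmink j (by omega)
lemma map_muZ : Measure.map ff (muZ zz) = muZ (fun n => ff (zz n)) := by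
  rw [muZ, muZ, Measure.map_sum ff_cont.measurable.aemeasurable]
  congr 1
  funext n
  rw [Measure.map_smul, Measure.map_dirac' ff_cont.measurable]


lemma memsupp : MemSupp (muZ zz) 0 := by
  intro ε hε
  obtain ⟨k, hk⟩ := ex_aa_le (half_pos hε)
  have hmem : zz (2*k) ∈ Set.Ioo (0 - ε) (0 + ε) := by
    rw [zz_even, Set.mem_Ioo]
    constructor
    · have := aa_pos k; linarith
    · linarith
  rw [muZ_apply zz measurableSet_Ioo]
  refine lt_of_lt_of_le ?_ (ENNReal.le_tsum (2*k))
  rw [Set.indicator_of_mem hmem, Pi.one_apply, mul_one]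
  exact pos_iff_ne_zero.2 (rr_ne_zero _)

end SceneryAux

/-- Example 5: there are a Radon measure `μ` with `0 ∈ supp μ` and an
orientation-preserving `C¹` diffeomorphism `f` with `f(0) = 0`, `f'(0) = 1` such
that `μ_{0,t} → δ_1` and `(fμ)_{0,t} → δ_{-1}` weak-* as `t → ∞`. -/
theorem exists_scenery_dirac_one_pushforward_dirac_neg_one :
    ∃ μ : Measure ℝ, IsLocallyFiniteMeasure μ ∧ MemSupp μ 0 ∧
      ∃ f : ℝ → ℝ, IsOPDiffeo f ∧ f 0 = 0 ∧ deriv f 0 = 1 ∧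
        (∀ φ : C(I01, ℝ),
          Tendsto (fun t : ℝ => ∫ a, φ a ∂(scenery μ 0 t : Measure I01))
            atTop (𝓝 (φ ⟨1, by norm_num⟩))) ∧
        (∀ φ : C(I01, ℝ),
          Tendsto (fun t : ℝ => ∫ a, φ a ∂(scenery (Measure.map f μ) 0 t : Measure I01))
            atTop (𝓝 (φ ⟨-1, by norm_num⟩))) := by
  refine ⟨SceneryAux.muZ SceneryAux.zz, inferInstance, SceneryAux.memsupp, SceneryAux.ff,
    ⟨SceneryAux.ff_contDiff, SceneryAux.ff_bij, SceneryAux.ff_deriv_pos⟩,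
    SceneryAux.ff_zero, SceneryAux.ff_deriv_zero, ?_, ?_⟩
  · exact SceneryAux.core SceneryAux.zz 1 (by norm_num) SceneryAux.H_pos
  · rw [SceneryAux.map_muZ]
    exact SceneryAux.core (fun n => SceneryAux.ff (SceneryAux.zz n)) (-1) (by norm_num)
      SceneryAux.H_neg
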